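/- From the Bailey transform with conjugate pair γ_L = a^L q^{L²}/(aq;q)_∞, δ_L = a^L q^{L²} applied to the Bailey pair α_0=1, α_L = (-1)^L q^{L(3L-1)/2}(1+q^L), β_L = 1/(q;q)_L (relative to 1): (1/(q;q)_∞) Σ_{L=-∞}^∞ (-1)^L q^{L(5L-1)/2} = Σ_{n=0}^∞ q^{n²}/(q;q)_n. -/

import Mathlib

/-- Finite q-shifted factorial `(q;q)_n`. -/
noncomputable def qp (q : ℂ) (n : ℕ) : ℂ := ∏ k ∈ Finset.range n, (1 - q ^ (k + 1))

/-- Infinite q-shifted factorial `(q;q)_∞`. -/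
noncomputable def qpinf (q : ℂ) : ℂ := ∏' k : ℕ, (1 - q ^ (k + 1))

open Finset Filter Topology


variable {q : ℂ}

lemma qp_succ (n : ℕ) : qp q (n + 1) = qp q n * (1 - q ^ (n + 1)) :=
  Finset.prod_range_succ _ n

lemma qp_zero : qp q 0 = 1 := rfl

lemma norm_pow_lt (hq : ‖q‖ < 1) (k : ℕ) : ‖q ^ (k+1)‖ < 1 := by
  rw [norm_pow]
  calc ‖q‖ ^ (k+1) ≤ ‖q‖ ^ 1 := by
        apply pow_le_pow_of_le_one (norm_nonneg q) hq.le; omega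
    _ < 1 := by simpa using hq

lemma one_sub_pow_ne (hq : ‖q‖ < 1) (k : ℕ) : (1 : ℂ) - q ^ (k+1) ≠ 0 := by
  intro h
  have : ‖q ^ (k+1)‖ = 1 := by
    have : (1 : ℂ) = q ^ (k+1) := by linear_combination h
    rw [← this, norm_one]
  linarith [norm_pow_lt hq k]

lemma qp_ne (hq : ‖q‖ < 1) (n : ℕ) : qp q n ≠ 0 :=
  Finset.prod_ne_zero_iff.2 fun k _ => one_sub_pow_ne hq k

/-- summability of the real log bound -/
lemma summable_neg_log (hq : ‖q‖ < 1) :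
    Summable (fun k : ℕ => -Real.log (1 - ‖q‖ ^ (k+1))) := by
  set x := ‖q‖ with hx
  have hx0 : 0 ≤ x := norm_nonneg q
  have hbound : ∀ k : ℕ, -Real.log (1 - x ^ (k+1)) ≤ x ^ (k+1) * (1-x)⁻¹ := by
    intro k
    have hxk : x ^ (k+1) ≤ x := by
      calc x ^ (k+1) ≤ x ^ 1 := by
            apply pow_le_pow_of_le_one hx0 hq.le; omega
        _ = x := pow_one x
    have h1 : 0 < 1 - x ^ (k+1) := by nlinarith
    have h2 : -Real.log (1 - x ^ (k+1)) = Real.log (1 - x ^ (k+1))⁻¹ := by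
      rw [Real.log_inv]
    rw [h2]
    have h3 := Real.log_le_sub_one_of_pos (inv_pos.2 h1)
    have h4 : (1 - x ^ (k+1))⁻¹ - 1 ≤ x ^ (k+1) * (1-x)⁻¹ := by
      have h5 : (1 - x ^ (k+1))⁻¹ - 1 = x ^ (k+1) * (1 - x ^ (k+1))⁻¹ := by
        field_simp
        ring
      rw [h5]
      gcongr <;> first | positivity | linarith
    linarith
  apply Summable.of_nonneg_of_le _ hbound
  · exact (summable_geometric_of_lt_one hx0 hq).mul_right _ |>.comp_injective (add_left_injective 1) |>.congr (fun k => rfl)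
  · intro k
    have hxk : x ^ (k+1) ≤ x := by
      calc x ^ (k+1) ≤ x ^ 1 := by
            apply pow_le_pow_of_le_one hx0 hq.le; omega
        _ = x := pow_one x
    have h1 : 0 < 1 - x ^ (k+1) := by nlinarith
    have : Real.log (1 - x^(k+1)) ≤ 0 := Real.log_nonpos (by linarith) (by nlinarith [pow_nonneg hx0 (k+1)])
    linarith

/-- uniform positive lower bound for ‖qp q n‖ -/
lemma qp_lower (hq : ‖q‖ < 1) :
    ∃ c : ℝ, 0 < c ∧ ∀ n, c ≤ ‖qp q n‖ := by
  set x := ‖q‖ with hx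
  have hx0 : 0 ≤ x := norm_nonneg q
  have hpos : ∀ k : ℕ, 0 < 1 - x ^ (k+1) := by
    intro k
    have hxk : x ^ (k+1) < 1 := by simpa using norm_pow_lt hq k
    linarith
  set M := ∑' k : ℕ, -Real.log (1 - x ^ (k+1)) with hM
  refine ⟨Real.exp (-M), Real.exp_pos _, fun n => ?_⟩
  have step1 : Real.exp (-M) ≤ ∏ k ∈ range n, (1 - x ^ (k+1)) := by
    have he : ∏ k ∈ range n, (1 - x ^ (k+1)) =
        Real.exp (∑ k ∈ range n, Real.log (1 - x ^ (k+1))) := by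
      rw [Real.exp_sum]
      exact (Finset.prod_congr rfl fun k _ => (Real.exp_log (hpos k)).symm)
    rw [he]
    apply Real.exp_le_exp.2
    have : ∑ k ∈ range n, -Real.log (1 - x ^ (k+1)) ≤ M := by
      apply Summable.sum_le_tsum _ _ (summable_neg_log hq)
      intro k _
      have : Real.log (1 - x^(k+1)) ≤ 0 :=
        Real.log_nonpos (by linarith [hpos k]) (by nlinarith [pow_nonneg hx0 (k+1)])
      linarith
    have h2 : -M ≤ ∑ k ∈ range n, Real.log (1 - x ^ (k+1)) := by
      have := this
      simp only [Finset.sum_neg_distrib] at this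
      linarith
    exact h2
  calc Real.exp (-M) ≤ ∏ k ∈ range n, (1 - x ^ (k+1)) := step1
    _ ≤ ‖qp q n‖ := by
        rw [qp, norm_prod]
        apply Finset.prod_le_prod
        · intro k _; linarith [hpos k]
        · intro k _
          calc 1 - x ^ (k+1) = ‖(1:ℂ)‖ - ‖q ^ (k+1)‖ := by
                rw [norm_one, norm_pow]
            _ ≤ ‖1 - q ^ (k+1)‖ := norm_sub_norm_le _ _

/-- uniform upper bound for ‖qp q n‖ -/
lemma qp_upper (hq : ‖q‖ < 1) :
    ∀ n, ‖qp q n‖ ≤ Real.exp (‖q‖ * (1 - ‖q‖)⁻¹) := by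
  set x := ‖q‖ with hx
  have hx0 : 0 ≤ x := norm_nonneg q
  intro n
  have h1 : ‖qp q n‖ ≤ ∏ k ∈ range n, (1 + x ^ (k+1)) := by
    rw [qp, norm_prod]
    apply Finset.prod_le_prod
    · intro k _; exact norm_nonneg _
    · intro k _
      calc ‖1 - q ^ (k+1)‖ ≤ ‖(1:ℂ)‖ + ‖q ^ (k+1)‖ := norm_sub_le _ _
        _ = 1 + x ^ (k+1) := by rw [norm_one, norm_pow]
  have h2 : ∏ k ∈ range n, (1 + x ^ (k+1)) ≤ Real.exp (∑ k ∈ range n, x ^ (k+1)) := by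
    rw [Real.exp_sum]
    apply Finset.prod_le_prod
    · intro k _; positivity
    · intro k _
      linarith [Real.add_one_le_exp (x ^ (k+1))]
  have h3 : ∑ k ∈ range n, x ^ (k+1) ≤ x * (1-x)⁻¹ := by
    have hs : Summable (fun k : ℕ => x ^ (k+1)) :=
      (summable_geometric_of_lt_one hx0 hq).comp_injective (add_left_injective 1) |>.congr (fun k => rfl)
    have := Summable.sum_le_tsum (range n) (fun k _ => by positivity) hs
    have ht : ∑' k : ℕ, x ^ (k+1) = x * (1-x)⁻¹ := by
      have : ∑' k : ℕ, x ^ (k+1) = x * ∑' k : ℕ, x ^ k := by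
        rw [← tsum_mul_left]
        congr 1; funext k; ring
      rw [this, tsum_geometric_of_lt_one hx0 hq]
    linarith [this, ht.le]
  calc ‖qp q n‖ ≤ ∏ k ∈ range n, (1 + x ^ (k+1)) := h1
    _ ≤ Real.exp (∑ k ∈ range n, x ^ (k+1)) := h2
    _ ≤ Real.exp (x * (1-x)⁻¹) := Real.exp_le_exp.2 h3
lemma summable_clog (hq : ‖q‖ < 1) :
    Summable (fun n : ℕ => Complex.log (1 - q ^ (n+1))) := by
  set x := ‖q‖ with hx
  have hx0 : 0 ≤ x := norm_nonneg q
  apply Summable.of_norm_bounded (g := fun n : ℕ => (x * (1-x)⁻¹/2 + 1) * x ^ (n+1))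
  · apply Summable.mul_left
    exact (summable_geometric_of_lt_one hx0 hq).comp_injective (add_left_injective 1) |>.congr (fun k => rfl)
  · intro n
    have hzn : ‖(-(q ^ (n+1)))‖ < 1 := by rw [norm_neg]; exact norm_pow_lt hq n
    have hb := Complex.norm_log_one_add_le hzn
    have he : (1 : ℂ) + -(q ^ (n+1)) = 1 - q ^ (n+1) := by ring
    rw [he] at hb
    rw [norm_neg, norm_pow] at hb
    have hxk : x ^ (n+1) ≤ x := by
      calc x ^ (n+1) ≤ x ^ 1 := by
            apply pow_le_pow_of_le_one hx0 hq.le; omega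
        _ = x := pow_one x
    have h1 : (x ^ (n+1)) ^ 2 * (1 - x ^ (n+1))⁻¹ / 2 ≤ x ^ (n+1) * x * (1-x)⁻¹ / 2 := by
      have : (x ^ (n+1)) ^ 2 = x ^ (n+1) * x ^ (n+1) := sq (x ^ (n+1))
      rw [this]
      have hlt : x ^ (n+1) < 1 := lt_of_le_of_lt hxk hq
      have hinv : (0:ℝ) ≤ (1 - x ^ (n+1))⁻¹ := by
        apply inv_nonneg.2; linarith
      gcongr <;> first | positivity | linarith
    calc ‖Complex.log (1 - q ^ (n+1))‖
        ≤ (x ^ (n+1)) ^ 2 * (1 - x ^ (n+1))⁻¹ / 2 + x ^ (n+1) := hb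
      _ ≤ x ^ (n+1) * x * (1-x)⁻¹ / 2 + x ^ (n+1) := by linarith
      _ = (x * (1-x)⁻¹/2 + 1) * x ^ (n+1) := by ring

lemma qpinf_eq_exp (hq : ‖q‖ < 1) :
    qpinf q = Complex.exp (∑' n : ℕ, Complex.log (1 - q ^ (n+1))) := by
  have h := Complex.cexp_tsum_eq_tprod (f := fun n : ℕ => 1 - q ^ (n+1))
    (fun n => one_sub_pow_ne hq n) (summable_clog hq)
  have := h
  simpa [qpinf] using this.symm

lemma qpinf_ne (hq : ‖q‖ < 1) : qpinf q ≠ 0 := by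
  rw [qpinf_eq_exp hq]; exact Complex.exp_ne_zero _

lemma multipliable_qp (hq : ‖q‖ < 1) : Multipliable (fun n : ℕ => 1 - q ^ (n+1)) :=
  Complex.multipliable_of_summable_log (summable_clog hq)

lemma tendsto_qp (hq : ‖q‖ < 1) :
    Tendsto (fun n => qp q n) atTop (𝓝 (qpinf q)) :=
  (multipliable_qp hq).hasProd.tendsto_prod_nat

/-- Gaussian binomial coefficient as a complex number, with integer lower index,
zero outside `0 ≤ m ≤ N`. -/
noncomputable def gb (q : ℂ) (N : ℕ) (m : ℤ) : ℂ :=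
  if 0 ≤ m ∧ m ≤ N then qp q N / (qp q m.toNat * qp q (N - m.toNat)) else 0

lemma gb_neg {N : ℕ} {m : ℤ} (h : m < 0) : gb q N m = 0 := by
  rw [gb, if_neg]; omega

lemma gb_gt {N : ℕ} {m : ℤ} (h : (N : ℤ) < m) : gb q N m = 0 := by
  rw [gb, if_neg]; omega

lemma gb_natCast {m N : ℕ} (h : m ≤ N) :
    gb q N (m : ℤ) = qp q N / (qp q m * qp q (N - m)) := by
  rw [gb, if_pos (by omega)]
  simp

lemma gb_zero' (hq : ‖q‖ < 1) (N : ℕ) : gb q N 0 = 1 := by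
  have : ((0:ℕ) : ℤ) = (0:ℤ) := rfl
  rw [← this, gb_natCast (Nat.zero_le N)]
  rw [qp_zero]
  field_simp [qp_ne hq N]
  simp

lemma gb_self (hq : ‖q‖ < 1) (N : ℕ) : gb q N (N : ℤ) = 1 := by
  rw [gb_natCast (le_refl N), Nat.sub_self, qp_zero]
  field_simp [qp_ne hq N]

private lemma pascal_helper1 (P A B a b : ℂ) (hA : A ≠ 0) (hB : B ≠ 0)
    (ha : 1 - a ≠ 0) (hb : 1 - b ≠ 0) :
    P * (1 - b * a) / ((A * (1 - a)) * (B * (1 - b))) =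
      P / ((A * (1 - a)) * B) + b * (P / (A * (B * (1 - b)))) := by
  field_simp
  ring

private lemma pascal_helper2 (P A B a b : ℂ) (hA : A ≠ 0) (hB : B ≠ 0)
    (ha : 1 - a ≠ 0) (hb : 1 - b ≠ 0) :
    P * (1 - b * a) / ((A * (1 - a)) * (B * (1 - b))) =
      a * (P / ((A * (1 - a)) * B)) + P / (A * (B * (1 - b))) := by
  field_simp
  ring

lemma one_sub_pow_ne' (hq : ‖q‖ < 1) {k : ℕ} (hk : 1 ≤ k) : (1 : ℂ) - q ^ k ≠ 0 := by
  obtain ⟨j, rfl⟩ : ∃ j, k = j + 1 := ⟨k - 1, by omega⟩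
  exact one_sub_pow_ne hq j

lemma qp_succ' (n : ℕ) (hn : 1 ≤ n) : qp q n = qp q (n-1) * (1 - q ^ n) := by
  obtain ⟨j, rfl⟩ : ∃ j, n = j + 1 := ⟨n - 1, by omega⟩
  simpa using qp_succ j

lemma gb_pascal1 (hq : ‖q‖ < 1) (N : ℕ) (m : ℤ) :
    gb q (N+1) m = gb q N m + q ^ ((N:ℤ)+1-m) * gb q N (m-1) := by
  rcases lt_or_ge m 0 with hm | hm
  · rw [gb_neg hm, gb_neg hm, gb_neg (show m - 1 < 0 by omega)]
    ring
  obtain ⟨mm, rfl⟩ : ∃ mm : ℕ, m = (mm : ℤ) := ⟨m.toNat, by omega⟩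
  rcases Nat.eq_zero_or_pos mm with rfl | hmm1
  · simp only [Nat.cast_zero]
    rw [gb_zero' hq, gb_zero' hq, gb_neg (show (0:ℤ) - 1 < 0 by omega)]
    ring
  rcases le_or_gt mm N with hmN | hmN
  · -- main case 1 ≤ mm ≤ N
    have hcast : ((mm : ℤ)) - 1 = ((mm - 1 : ℕ) : ℤ) := by omega
    have hexp : (N:ℤ)+1-(mm:ℤ) = ((N+1-mm : ℕ) : ℤ) := by omega
    rw [hcast, hexp, zpow_natCast,
      gb_natCast (show mm ≤ N + 1 by omega), gb_natCast hmN,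
      gb_natCast (show mm - 1 ≤ N by omega)]
    have e1 : qp q (N+1) = qp q N * (1 - q ^ (N+1)) := qp_succ N
    have e2 : qp q mm = qp q (mm-1) * (1 - q ^ mm) := qp_succ' mm hmm1
    have e3 : qp q (N+1-mm) = qp q (N-mm) * (1 - q ^ (N+1-mm)) := by
      have h1 : N+1-mm = (N-mm) + 1 := by omega
      rw [h1, qp_succ]
    have e4 : N - (mm - 1) = N + 1 - mm := by omega
    have e5 : q ^ (N+1) = q ^ (N+1-mm) * q ^ mm := by
      rw [← pow_add]
      congr 1
      omega
    rw [e1, e2, e4, e3, e5]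
    exact pascal_helper1 (qp q N) (qp q (mm-1)) (qp q (N-mm)) (q^mm) (q^(N+1-mm))
      (qp_ne hq _) (qp_ne hq _) (one_sub_pow_ne' hq hmm1) (one_sub_pow_ne' hq (by omega))
  rcases Nat.eq_or_lt_of_le hmN with he | hlt
  · -- mm = N+1
    have h1 : (mm : ℤ) = ((N+1 : ℕ) : ℤ) := by omega
    have h2 : (mm : ℤ) - 1 = (N : ℤ) := by omega
    rw [h2, h1, gb_self hq (N+1), gb_gt (show (N:ℤ) < ((N+1:ℕ):ℤ) by omega),
      gb_self hq N, show (N:ℤ)+1-((N+1:ℕ):ℤ) = 0 by omega, zpow_zero]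
    ring
  · -- mm ≥ N+2
    rw [gb_gt (show ((N+1:ℕ):ℤ) < (mm:ℤ) by omega), gb_gt (show (N:ℤ) < (mm:ℤ) by omega),
      gb_gt (show (N:ℤ) < (mm:ℤ) - 1 by omega)]
    ring

lemma gb_pascal2 (hq : ‖q‖ < 1) (N : ℕ) (m : ℤ) :
    gb q (N+1) m = q ^ m * gb q N m + gb q N (m-1) := by
  rcases lt_or_ge m 0 with hm | hm
  · rw [gb_neg hm, gb_neg hm, gb_neg (show m - 1 < 0 by omega)]
    ring
  obtain ⟨mm, rfl⟩ : ∃ mm : ℕ, m = (mm : ℤ) := ⟨m.toNat, by omega⟩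
  rcases Nat.eq_zero_or_pos mm with rfl | hmm1
  · simp only [Nat.cast_zero]
    rw [gb_zero' hq, gb_zero' hq, gb_neg (show (0:ℤ) - 1 < 0 by omega)]
    simp
  rcases le_or_gt mm N with hmN | hmN
  · have hcast : ((mm : ℤ)) - 1 = ((mm - 1 : ℕ) : ℤ) := by omega
    rw [hcast, zpow_natCast,
      gb_natCast (show mm ≤ N + 1 by omega), gb_natCast hmN,
      gb_natCast (show mm - 1 ≤ N by omega)]
    have e1 : qp q (N+1) = qp q N * (1 - q ^ (N+1)) := qp_succ N
    have e2 : qp q mm = qp q (mm-1) * (1 - q ^ mm) := qp_succ' mm hmm1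
    have e3 : qp q (N+1-mm) = qp q (N-mm) * (1 - q ^ (N+1-mm)) := by
      have h1 : N+1-mm = (N-mm) + 1 := by omega
      rw [h1, qp_succ]
    have e4 : N - (mm - 1) = N + 1 - mm := by omega
    have e5 : q ^ (N+1) = q ^ (N+1-mm) * q ^ mm := by
      rw [← pow_add]
      congr 1
      omega
    rw [e1, e2, e4, e3, e5]
    exact pascal_helper2 (qp q N) (qp q (mm-1)) (qp q (N-mm)) (q^mm) (q^(N+1-mm))
      (qp_ne hq _) (qp_ne hq _) (one_sub_pow_ne' hq hmm1) (one_sub_pow_ne' hq (by omega))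
  rcases Nat.eq_or_lt_of_le hmN with he | hlt
  · have h2 : (mm : ℤ) - 1 = (N : ℤ) := by omega
    have h3 : (mm:ℤ) = ((N+1:ℕ):ℤ) := by omega
    rw [h2, gb_gt (show (N:ℤ) < (mm:ℤ) by omega), gb_self hq N, h3, gb_self hq (N+1)]
    ring
  · rw [gb_gt (show ((N+1:ℕ):ℤ) < (mm:ℤ) by omega), gb_gt (show (N:ℤ) < (mm:ℤ) by omega),
      gb_gt (show (N:ℤ) < (mm:ℤ) - 1 by omega)]
    ring

/-- Left side Schur polynomial: `∑ q^{k²} C(n-k, k)_q`. -/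
noncomputable def Ee (q : ℂ) (n : ℕ) : ℂ :=
  ∑ k ∈ Finset.range (n+1), q ^ (k^2) * gb q (n - k) (k : ℤ)

lemma Ee_zero (hq : ‖q‖ < 1) : Ee q 0 = 1 := by
  simp [Ee, gb_zero' hq]

lemma Ee_one (hq : ‖q‖ < 1) : Ee q 1 = 1 := by
  rw [Ee]
  rw [Finset.sum_range_succ, Finset.sum_range_one]
  simp only [Nat.cast_zero, Nat.cast_one]
  rw [gb_zero' hq, gb_gt (show ((1-1 : ℕ):ℤ) < (1:ℤ) by omega)]
  simp

lemma Ee_rec (hq : ‖q‖ < 1) (n : ℕ) :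
    Ee q (n+2) = Ee q (n+1) + q^(n+1) * Ee q n := by
  have step1 : Ee q (n+2) = ∑ k ∈ Finset.range (n+2), q^(k^2) * gb q (n+2-k) (k:ℤ) := by
    rw [Ee, Finset.sum_range_succ, show n+2-(n+2) = 0 from by omega,
      gb_gt (show ((0:ℕ):ℤ) < ((n+2:ℕ):ℤ) by omega), mul_zero, add_zero]
  rw [step1]
  have step2 : ∀ k ∈ Finset.range (n+2), q^(k^2) * gb q (n+2-k) (k:ℤ) =
      q^(k^2) * gb q (n+1-k) (k:ℤ) +
        q^(k^2) * (q ^ (((n+1-k:ℕ):ℤ)+1-(k:ℤ)) * gb q (n+1-k) ((k:ℤ)-1)) := by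
    intro k hk
    rw [Finset.mem_range] at hk
    rw [show n+2-k = (n+1-k)+1 from by omega, gb_pascal1 hq (n+1-k) (k:ℤ)]
    ring
  rw [Finset.sum_congr rfl step2, Finset.sum_add_distrib]
  congr 1
  have peel : ∑ k ∈ Finset.range (n+2),
      q^(k^2) * (q ^ (((n+1-k:ℕ):ℤ)+1-(k:ℤ)) * gb q (n+1-k) ((k:ℤ)-1)) =
      (∑ i ∈ Finset.range (n+1),
      q^((i+1)^2) * (q ^ (((n+1-(i+1):ℕ):ℤ)+1-((i+1:ℕ):ℤ)) * gb q (n+1-(i+1)) (((i+1:ℕ):ℤ)-1)))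
      + q^(0^2) * (q ^ (((n+1-0:ℕ):ℤ)+1-((0:ℕ):ℤ)) * gb q (n+1-0) (((0:ℕ):ℤ)-1)) :=
    Finset.sum_range_succ' _ (n+1)
  rw [peel, gb_neg (show ((0:ℕ):ℤ)-1 < 0 by omega)]
  rw [mul_zero, mul_zero, add_zero]
  have step3 : ∀ i ∈ Finset.range (n+1),
      q^((i+1)^2) * (q ^ (((n+1-(i+1):ℕ):ℤ)+1-((i+1:ℕ):ℤ)) * gb q (n+1-(i+1)) (((i+1:ℕ):ℤ)-1)) =
      q^(n+1) * (q^(i^2) * gb q (n-i) (i:ℤ)) := by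
    intro i hi
    rw [Finset.mem_range] at hi
    have hni : n+1-(i+1) = n-i := by omega
    have hci : ((i+1:ℕ):ℤ)-1 = (i:ℤ) := by push_cast; ring
    rw [hni, hci]
    rcases le_or_gt (2*i) n with hcase | hcase
    · have hexp : ((n-i:ℕ):ℤ)+1-((i+1:ℕ):ℤ) = ((n-2*i : ℕ):ℤ) := by omega
      rw [hexp, zpow_natCast, ← mul_assoc, ← pow_add, ← mul_assoc, ← pow_add]
      have hE : (i+1)^2 + (n-2*i) = (n+1) + i^2 := by
        have h : (i+1)^2 = i^2+2*i+1 := by ring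
        omega
      rw [hE]
    · have h0 : gb q (n-i) (i:ℤ) = 0 := gb_gt (by omega)
      rw [h0]
      simp
  rw [Finset.sum_congr rfl step3, ← Finset.mul_sum]
  rfl

/-- Weight in the Schur `D` polynomial. -/
noncomputable def wD (q : ℂ) (j : ℤ) : ℂ := (-1 : ℂ)^j * q ^ ((j*(5*j+1))/2)

/-- Term of the Schur `D` polynomial. -/
noncomputable def tD (q : ℂ) (n : ℕ) (j : ℤ) : ℂ := wD q j * gb q n (((n:ℤ) - 5*j)/2)

/-- Schur's `D` polynomial. -/
noncomputable def Dd (q : ℂ) (n : ℕ) : ℂ :=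
  ∑ j ∈ Finset.Icc (-(n:ℤ)-1) ((n:ℤ)+1), tD q n j

/-- Residual used in the telescoping proof of the recurrence for `Dd`. -/
noncomputable def SD (q : ℂ) (n : ℕ) (j : ℤ) : ℂ :=
  if ((n:ℤ)+2-5*j) % 2 = 0 then
    (-1 : ℂ)^j * q ^ ((j*(5*j+1))/2 + ((n:ℤ)+2-5*j)/2) * gb q n (((n:ℤ)+2-5*j)/2)
  else 0

lemma tD_zero {n : ℕ} {j : ℤ} (h : j < -(n:ℤ)-1 ∨ (n:ℤ)+1 < j) : tD q n j = 0 := by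
  rcases h with h | h
  · rw [tD, gb_gt (show (n:ℤ) < ((n:ℤ) - 5*j)/2 by omega), mul_zero]
  · rw [tD, gb_neg (show ((n:ℤ) - 5*j)/2 < 0 by omega), mul_zero]

lemma Dd_ext {n : ℕ} {A B : ℤ} (hA : A ≤ -(n:ℤ)-1) (hB : (n:ℤ)+1 ≤ B) :
    ∑ j ∈ Finset.Icc A B, tD q n j = Dd q n := by
  rw [Dd]
  apply (Finset.sum_subset (Finset.Icc_subset_Icc hA hB) _).symm
  intro j hj hnot
  rw [Finset.mem_Icc] at hj hnot
  exact tD_zero (by omega)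

lemma parity_c (j : ℤ) : ∃ c : ℤ, j*(5*j+1) = 2*c := by
  rcases Int.even_or_odd j with ⟨t, ht⟩ | ⟨t, ht⟩
  · exact ⟨t*(10*t+1), by subst ht; ring⟩
  · exact ⟨(2*t+1)*(5*t+3), by subst ht; ring⟩

lemma tD_rec_term (hq : ‖q‖ < 1) (hq0 : q ≠ 0) (n : ℕ) (j : ℤ) :
    tD q (n+2) j - tD q (n+1) j - q^((n:ℤ)+1) * tD q n j = SD q n j - SD q n (j+1) := by
  obtain ⟨cj, hcj⟩ := parity_c j
  have hc1 : (j+1)*(5*(j+1)+1) = 2*cj + 10*j + 6 := by linear_combination hcj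
  have hcast2 : ((n+2:ℕ):ℤ) = (n:ℤ)+2 := by push_cast; ring
  have hcast1 : ((n+1:ℕ):ℤ) = (n:ℤ)+1 := by push_cast; ring
  rcases Int.even_or_odd ((n:ℤ)+2-5*j) with ⟨m, hm⟩ | ⟨m, hm⟩
  · -- even case : n+2-5j = 2m
    rw [SD, if_pos (by omega), SD, if_neg (by omega)]
    rw [tD, tD, tD, wD, hcast2, hcast1]
    rw [show ((n:ℤ)+2 - 5*j)/2 = m from by omega, show ((n:ℤ)+1 - 5*j)/2 = m-1 from by omega,
      show ((n:ℤ) - 5*j)/2 = m-1 from by omega]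
    have e1 := gb_pascal2 hq (n+1) m
    rw [show (n+1)+1 = n+2 from rfl] at e1
    have e2 := gb_pascal1 hq n m
    rw [e1, e2]
    rw [hcj, show (2*cj)/2 = cj from by omega]
    have hp1 : q ^ (cj + m) = q ^ cj * q ^ m := zpow_add₀ hq0 cj m
    have hp2 : q ^ ((n:ℤ)+1) = q ^ m * q ^ ((n:ℤ)+1-m) := by
      rw [← zpow_add₀ hq0]; congr 1; ring
    rw [hp1, hp2]
    ring
  · -- odd case : n+2-5j = 2m+1
    rw [SD, if_neg (by omega), SD, if_pos (by omega)]
    rw [tD, tD, tD, wD, hcast2, hcast1]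
    rw [show ((n:ℤ)+2 - 5*j)/2 = m from by omega, show ((n:ℤ)+1 - 5*j)/2 = m from by omega,
      show ((n:ℤ) - 5*j)/2 = m-1 from by omega,
      show ((n:ℤ)+2 - 5*(j+1))/2 = m-2 from by omega]
    have e1 := gb_pascal1 hq (n+1) m
    rw [show (n+1)+1 = n+2 from rfl, hcast1] at e1
    have e2 := gb_pascal2 hq n (m-1)
    rw [show m-1-1 = m-2 from by ring] at e2
    rw [e1, e2]
    rw [hcj, show (2*cj)/2 = cj from by omega, hc1,
      show (2*cj + 10*j + 6)/2 = cj + 5*j + 3 from by omega,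
      show cj + 5*j + 3 + (m-2) = cj + ((n:ℤ)+2-m) from by omega]
    have hm1 : (-1 : ℂ) ^ (j+1) = (-1 : ℂ)^j * (-1) := zpow_add_one₀ (by norm_num) j
    have hp1 : q ^ (cj + ((n:ℤ)+2-m)) = q ^ cj * q ^ ((n:ℤ)+2-m) := zpow_add₀ hq0 _ _
    have hp2 : q ^ ((n:ℤ)+1) = q ^ ((n:ℤ)+2-m) * q ^ (m-1) := by
      rw [← zpow_add₀ hq0]; congr 1; ring
    rw [hm1, hp1, hp2]
    ring

lemma telescope (f : ℤ → ℂ) (A : ℤ) :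
    ∀ N : ℕ, ∑ j ∈ Finset.Icc A (A + (N:ℤ)), (f j - f (j+1)) = f A - f (A + (N:ℤ) + 1) := by
  intro N
  induction N with
  | zero => simp
  | succ N ih =>
    have hs : Finset.Icc A (A + ((N+1 : ℕ):ℤ)) =
        insert (A + (N:ℤ) + 1) (Finset.Icc A (A + (N:ℤ))) := by
      ext x
      simp only [Finset.mem_Icc, Finset.mem_insert]
      omega
    rw [hs, Finset.sum_insert (by simp only [Finset.mem_Icc]; omega), ih]
    have : A + ((N+1:ℕ):ℤ) + 1 = (A + (N:ℤ) + 1) + 1 := by push_cast; ring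
    rw [this]
    ring

lemma SD_bd_low (hq : ‖q‖ < 1) (n : ℕ) : SD q n (-(n:ℤ)-3) = 0 := by
  rw [SD]
  split_ifs with h
  · rw [gb_gt (show (n:ℤ) < ((n:ℤ)+2-5*(-(n:ℤ)-3))/2 by omega), mul_zero]
  · rfl

lemma SD_bd_high (hq : ‖q‖ < 1) (n : ℕ) : SD q n ((n:ℤ)+4) = 0 := by
  rw [SD]
  split_ifs with h
  · rw [gb_neg (show ((n:ℤ)+2-5*((n:ℤ)+4))/2 < 0 by omega), mul_zero]
  · rfl

lemma Dd_rec (hq : ‖q‖ < 1) (hq0 : q ≠ 0) (n : ℕ) :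
    Dd q (n+2) = Dd q (n+1) + q^(n+1) * Dd q n := by
  have hA : ∀ k : ℕ, k ≤ n+2 → (∑ j ∈ Finset.Icc (-(n:ℤ)-3) ((n:ℤ)+3), tD q k j) = Dd q k := by
    intro k hk
    exact Dd_ext (by omega) (by omega)
  have key : ∑ j ∈ Finset.Icc (-(n:ℤ)-3) ((n:ℤ)+3),
      (tD q (n+2) j - tD q (n+1) j - q^((n:ℤ)+1) * tD q n j) = 0 := by
    have := Finset.sum_congr rfl (fun j (_ : j ∈ Finset.Icc (-(n:ℤ)-3) ((n:ℤ)+3)) =>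
      tD_rec_term hq hq0 n j)
    rw [this]
    have htel := telescope (SD q n) (-(n:ℤ)-3) (2*n+6)
    have hend : -(n:ℤ)-3 + ((2*n+6 : ℕ):ℤ) = (n:ℤ)+3 := by push_cast; ring
    rw [hend] at htel
    rw [htel, show (n:ℤ)+3+1 = (n:ℤ)+4 from by ring,
      SD_bd_low hq n, SD_bd_high hq n, sub_zero]
  have expand : ∑ j ∈ Finset.Icc (-(n:ℤ)-3) ((n:ℤ)+3),
      (tD q (n+2) j - tD q (n+1) j - q^((n:ℤ)+1) * tD q n j)
      = (∑ j ∈ Finset.Icc (-(n:ℤ)-3) ((n:ℤ)+3), tD q (n+2) j)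
        - (∑ j ∈ Finset.Icc (-(n:ℤ)-3) ((n:ℤ)+3), tD q (n+1) j)
        - q^((n:ℤ)+1) * ∑ j ∈ Finset.Icc (-(n:ℤ)-3) ((n:ℤ)+3), tD q n j := by
    rw [Finset.sum_sub_distrib, Finset.sum_sub_distrib, Finset.mul_sum]
  rw [expand, hA (n+2) (by omega), hA (n+1) (by omega), hA n (by omega)] at key
  have hzp : q^((n:ℤ)+1) = q^(n+1 : ℕ) := by
    norm_cast
  rw [hzp] at key
  linear_combination key

lemma Dd_zero (hq : ‖q‖ < 1) : Dd q 0 = 1 := by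
  rw [Dd, show -((0:ℕ):ℤ)-1 = -1 from by norm_num, show ((0:ℕ):ℤ)+1 = 1 from by norm_num,
    show Finset.Icc (-1:ℤ) 1 = {-1,0,1} from by decide,
    Finset.sum_insert (by decide), Finset.sum_insert (by decide), Finset.sum_singleton]
  have t1 : tD q 0 (-1) = 0 := by
    rw [tD, gb_gt (show ((0:ℕ):ℤ) < (((0:ℕ):ℤ) - 5*(-1))/2 from by omega), mul_zero]
  have t2 : tD q 0 0 = 1 := by
    rw [tD, show (((0:ℕ):ℤ) - 5*0)/2 = 0 from by omega, gb_zero' hq, wD,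
      show ((0:ℤ)*(5*0+1))/2 = 0 from by norm_num]
    simp
  have t3 : tD q 0 1 = 0 := by
    rw [tD, gb_neg (show (((0:ℕ):ℤ) - 5*1)/2 < 0 from by omega), mul_zero]
  rw [t1, t2, t3]
  norm_num

lemma Dd_one (hq : ‖q‖ < 1) : Dd q 1 = 1 := by
  rw [Dd, show -((1:ℕ):ℤ)-1 = -2 from by norm_num, show ((1:ℕ):ℤ)+1 = 2 from by norm_num,
    show Finset.Icc (-2:ℤ) 2 = {-2,-1,0,1,2} from by decide,
    Finset.sum_insert (by decide), Finset.sum_insert (by decide),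
    Finset.sum_insert (by decide), Finset.sum_insert (by decide), Finset.sum_singleton]
  have t0 : tD q 1 (-2) = 0 := by
    rw [tD, gb_gt (show ((1:ℕ):ℤ) < (((1:ℕ):ℤ) - 5*(-2))/2 from by omega), mul_zero]
  have t1 : tD q 1 (-1) = 0 := by
    rw [tD, gb_gt (show ((1:ℕ):ℤ) < (((1:ℕ):ℤ) - 5*(-1))/2 from by omega), mul_zero]
  have t2 : tD q 1 0 = 1 := by
    rw [tD, show (((1:ℕ):ℤ) - 5*0)/2 = 0 from by omega, gb_zero' hq, wD,
      show ((0:ℤ)*(5*0+1))/2 = 0 from by norm_num]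
    simp
  have t3 : tD q 1 1 = 0 := by
    rw [tD, gb_neg (show (((1:ℕ):ℤ) - 5*1)/2 < 0 from by omega), mul_zero]
  have t4 : tD q 1 2 = 0 := by
    rw [tD, gb_neg (show (((1:ℕ):ℤ) - 5*2)/2 < 0 from by omega), mul_zero]
  rw [t0, t1, t2, t3, t4]
  norm_num

lemma Ee_eq_Dd (hq : ‖q‖ < 1) (hq0 : q ≠ 0) : ∀ n, Ee q n = Dd q n := by
  have H : ∀ n, Ee q n = Dd q n ∧ Ee q (n+1) = Dd q (n+1) := by
    intro n
    induction n with
    | zero => exact ⟨(Ee_zero hq).trans (Dd_zero hq).symm, (Ee_one hq).trans (Dd_one hq).symm⟩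
    | succ n ih =>
      refine ⟨ih.2, ?_⟩
      rw [Ee_rec hq n, Dd_rec hq hq0 n, ih.1, ih.2]
  exact fun n => (H n).1

lemma zpow_le_mono {x : ℝ} (hx0 : 0 < x) (hx1 : x ≤ 1) {a b : ℤ} (h : a ≤ b) :
    x ^ b ≤ x ^ a := by
  have hb : x ^ b = x ^ a * x ^ (b - a) := by
    rw [← zpow_add₀ (ne_of_gt hx0)]; congr 1; ring
  rw [hb]
  have h2 : x ^ (b - a) = x ^ ((b-a).toNat) := by
    rw [← zpow_natCast]; congr 1; omega
  have h3 : x ^ ((b-a).toNat) ≤ 1 := pow_le_one₀ hx0.le hx1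
  calc x ^ a * x ^ (b-a) = x ^ a * x ^ ((b-a).toNat) := by rw [h2]
    _ ≤ x ^ a * 1 := by
        apply mul_le_mul_of_nonneg_left h3 (le_of_lt (zpow_pos hx0 a))
    _ = x ^ a := mul_one _

lemma gb_bound (hq : ‖q‖ < 1) {c : ℝ} (hc0 : 0 < c) (hc : ∀ k, c ≤ ‖qp q k‖) (N : ℕ) (m : ℤ) :
    ‖gb q N m‖ ≤ Real.exp (‖q‖ * (1 - ‖q‖)⁻¹) / (c * c) := by
  set C := Real.exp (‖q‖ * (1 - ‖q‖)⁻¹) with hC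
  have hCpos : 0 < C := Real.exp_pos _
  rw [gb]
  split_ifs with h
  · rw [norm_div, norm_mul]
    apply div_le_div₀ hCpos.le (qp_upper hq N) (by positivity)
    calc c * c ≤ ‖qp q m.toNat‖ * ‖qp q (N - m.toNat)‖ :=
          mul_le_mul (hc _) (hc _) hc0.le (norm_nonneg _)
      _ = ‖qp q m.toNat‖ * ‖qp q (N - m.toNat)‖ := rfl
  · rw [norm_zero]
    positivity

lemma tendsto_Ee (hq : ‖q‖ < 1) :
    Tendsto (fun n => Ee q n) atTop (𝓝 (∑' k : ℕ, q ^ (k^2) / qp q k)) := by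
  obtain ⟨c, hc0, hc⟩ := qp_lower hq
  set C := Real.exp (‖q‖ * (1 - ‖q‖)⁻¹) with hCdef
  have hrw : ∀ n, Ee q n = ∑' k : ℕ, q^(k^2) * gb q (n-k) (k:ℤ) := by
    intro n
    rw [Ee]
    symm
    apply tsum_eq_sum
    intro k hk
    rw [Finset.mem_range] at hk
    rw [gb_gt (show ((n-k:ℕ):ℤ) < (k:ℤ) from by omega), mul_zero]
  apply Filter.Tendsto.congr (fun n => (hrw n).symm)
  apply tendsto_tsum_of_dominated_convergence (bound := fun k : ℕ => C / (c*c) * ‖q‖ ^ k)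
  · exact (summable_geometric_of_lt_one (norm_nonneg q) hq).mul_left _
  · intro k
    have hF : Tendsto (fun n : ℕ => qp q (n-k) / (qp q k * qp q (n - 2*k))) atTop
        (𝓝 (qpinf q / (qp q k * qpinf q))) := by
      apply Filter.Tendsto.div
      · exact (tendsto_qp hq).comp (tendsto_sub_atTop_nat k)
      · exact tendsto_const_nhds.mul ((tendsto_qp hq).comp (tendsto_sub_atTop_nat (2*k)))
      · exact mul_ne_zero (qp_ne hq k) (qpinf_ne hq)
    have hlim : qpinf q / (qp q k * qpinf q) = (qp q k)⁻¹ := by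
      field_simp [qpinf_ne hq, qp_ne hq k]
    rw [hlim] at hF
    have hEv : ∀ᶠ n in atTop, qp q (n-k) / (qp q k * qp q (n - 2*k)) = gb q (n-k) (k : ℤ) := by
      filter_upwards [eventually_ge_atTop (2*k)] with n hn
      rw [gb_natCast (show k ≤ n - k from by omega),
        show n - k - k = n - 2*k from by omega]
    have hgb : Tendsto (fun n : ℕ => gb q (n-k) (k:ℤ)) atTop (𝓝 (qp q k)⁻¹) :=
      hF.congr' hEv
    have := hgb.const_mul (q ^ (k^2))
    simpa [div_eq_mul_inv] using this
  · apply Filter.Eventually.of_forall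
    intro n k
    rw [norm_mul, norm_pow]
    calc ‖q‖^(k^2) * ‖gb q (n-k) (k:ℤ)‖ ≤ ‖q‖^k * (C / (c*c)) := by
          apply mul_le_mul _ (gb_bound hq hc0 hc _ _) (norm_nonneg _) (by positivity)
          apply pow_le_pow_of_le_one (norm_nonneg q) hq.le
          exact Nat.le_self_pow two_ne_zero k
      _ = C / (c*c) * ‖q‖ ^ k := mul_comm _ _

lemma norm_wD_le (hq : ‖q‖ < 1) (hq0 : q ≠ 0) (j : ℤ) : ‖wD q j‖ ≤ ‖q‖ ^ j.natAbs := by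
  have hx0 : 0 < ‖q‖ := norm_pos_iff.2 hq0
  rw [wD, norm_mul, norm_zpow, norm_zpow, norm_neg, norm_one, one_zpow, one_mul]
  have hle : (j.natAbs : ℤ) ≤ (j*(5*j+1))/2 := by
    have h5 : 2*(j.natAbs : ℤ) ≤ j*(5*j+1) := by
      rcases lt_trichotomy j 0 with h | rfl | h
      · have hj : (j.natAbs : ℤ) = -j := by omega
        rw [hj]
        nlinarith [mul_nonneg (by omega : (0:ℤ) ≤ -j) (by omega : (0:ℤ) ≤ -(5*j+3))]
      · simp
      · have hj : (j.natAbs : ℤ) = j := by omega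
        rw [hj]
        nlinarith [mul_nonneg (by omega : (0:ℤ) ≤ j) (by omega : (0:ℤ) ≤ 5*j - 1)]
    set P := j*(5*j+1) with hP
    omega
  calc ‖q‖ ^ ((j*(5*j+1))/2) ≤ ‖q‖ ^ ((j.natAbs : ℤ)) := zpow_le_mono hx0 hq.le hle
    _ = ‖q‖ ^ j.natAbs := zpow_natCast _ _

lemma summable_bound_int (hq : ‖q‖ < 1) (K : ℝ) :
    Summable (fun j : ℤ => K * ‖q‖ ^ j.natAbs) := by
  apply Summable.of_nat_of_neg
  · simp only [Int.natAbs_natCast]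
    exact (summable_geometric_of_lt_one (norm_nonneg q) hq).mul_left K
  · simp only [Int.natAbs_neg, Int.natAbs_natCast]
    exact (summable_geometric_of_lt_one (norm_nonneg q) hq).mul_left K

lemma tendsto_Dd (hq : ‖q‖ < 1) (hq0 : q ≠ 0) :
    Tendsto (fun n => Dd q n) atTop (𝓝 ((∑' j : ℤ, wD q j) * (qpinf q)⁻¹)) := by
  obtain ⟨c, hc0, hc⟩ := qp_lower hq
  set C := Real.exp (‖q‖ * (1 - ‖q‖)⁻¹) with hCdef
  have hrw : ∀ n, Dd q n = ∑' j : ℤ, tD q n j := by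
    intro n
    rw [Dd]
    symm
    apply tsum_eq_sum
    intro j hj
    rw [Finset.mem_Icc] at hj
    exact tD_zero (by omega)
  apply Filter.Tendsto.congr (fun n => (hrw n).symm)
  have htsum : (∑' j : ℤ, wD q j) * (qpinf q)⁻¹ = ∑' j : ℤ, wD q j * (qpinf q)⁻¹ :=
    (tsum_mul_right).symm
  rw [htsum]
  apply tendsto_tsum_of_dominated_convergence (bound := fun j : ℤ => C/(c*c) * ‖q‖ ^ j.natAbs)
  · exact summable_bound_int hq _
  · intro j
    have hm : Tendsto (fun n : ℕ => (((n:ℤ) - 5*j)/2).toNat) atTop atTop := by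
      apply tendsto_atTop.2
      intro b
      filter_upwards [eventually_ge_atTop (2*b + 5*j.natAbs + 2)] with n hn
      omega
    have hm2 : Tendsto (fun n : ℕ => n - (((n:ℤ) - 5*j)/2).toNat) atTop atTop := by
      apply tendsto_atTop.2
      intro b
      filter_upwards [eventually_ge_atTop (2*b + 5*j.natAbs + 2)] with n hn
      omega
    have hF : Tendsto (fun n : ℕ =>
        qp q n / (qp q ((((n:ℤ) - 5*j)/2).toNat) * qp q (n - (((n:ℤ) - 5*j)/2).toNat)))
        atTop (𝓝 (qpinf q / (qpinf q * qpinf q))) := by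
      apply Filter.Tendsto.div
      · exact tendsto_qp hq
      · exact ((tendsto_qp hq).comp hm).mul ((tendsto_qp hq).comp hm2)
      · exact mul_ne_zero (qpinf_ne hq) (qpinf_ne hq)
    have hlim : qpinf q / (qpinf q * qpinf q) = (qpinf q)⁻¹ := by
      field_simp [qpinf_ne hq]
    rw [hlim] at hF
    have hEv : ∀ᶠ n in atTop,
        qp q n / (qp q ((((n:ℤ) - 5*j)/2).toNat) * qp q (n - (((n:ℤ) - 5*j)/2).toNat))
          = gb q n (((n:ℤ) - 5*j)/2) := by
      filter_upwards [eventually_ge_atTop (5*j.natAbs + 1)] with n hn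
      rw [gb, if_pos (by omega)]
    have hgb : Tendsto (fun n : ℕ => gb q n (((n:ℤ) - 5*j)/2)) atTop (𝓝 (qpinf q)⁻¹) :=
      hF.congr' hEv
    exact hgb.const_mul (wD q j)
  · apply Filter.Eventually.of_forall
    intro n j
    rw [tD, norm_mul]
    calc ‖wD q j‖ * ‖gb q n (((n:ℤ) - 5*j)/2)‖ ≤ ‖q‖ ^ j.natAbs * (C/(c*c)) :=
          mul_le_mul (norm_wD_le hq hq0 j) (gb_bound hq hc0 hc _ _) (norm_nonneg _)
            (by positivity)
      _ = C/(c*c) * ‖q‖ ^ j.natAbs := mul_comm _ _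

/-- The key identity, for `q ≠ 0`. -/
lemma key_identity (hq : ‖q‖ < 1) (hq0 : q ≠ 0) :
    ∑' k : ℕ, q ^ (k^2) / qp q k = (∑' j : ℤ, wD q j) * (qpinf q)⁻¹ := by
  have h1 := tendsto_Ee hq
  have h2 := tendsto_Dd hq hq0
  have h3 : (fun n => Ee q n) = (fun n => Dd q n) := funext (Ee_eq_Dd hq hq0)
  rw [h3] at h1
  exact tendsto_nhds_unique h1 h2


/-- the bilateral-series form of the first Rogers–Ramanujan identity obtained
from the Bailey transform. -/
theorem bilateral_rogers_ramanujan (q : ℂ) (hq : ‖q‖ < 1) :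
    (1 / qpinf q) * ∑' L : ℤ, (-1 : ℂ) ^ L * q ^ ((L * (5 * L - 1)) / 2) =
      ∑' n : ℕ, q ^ (n ^ 2) / qp q n := by
  by_cases hq0 : q = 0
  · subst hq0
    have hqp : ∀ n, qp (0:ℂ) n = 1 := by
      intro n
      rw [qp]
      apply Finset.prod_eq_one
      intro k _
      rw [zero_pow (Nat.succ_ne_zero k)]
      ring
    have hqpinf : qpinf (0:ℂ) = 1 := by
      rw [qpinf]
      have : (fun k : ℕ => 1 - (0:ℂ)^(k+1)) = fun _ => 1 := by
        funext k
        rw [zero_pow (Nat.succ_ne_zero k)]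
        ring
      rw [this, tprod_one]
    have hL : ∑' L : ℤ, (-1 : ℂ)^L * (0:ℂ)^((L*(5*L-1))/2) = 1 := by
      rw [tsum_eq_single 0]
      · norm_num
      · intro L hL
        have hpos : 4 ≤ L*(5*L-1) := by
          rcases lt_or_gt_of_ne hL with h | h <;> nlinarith
        have he : (L*(5*L-1))/2 ≠ 0 := by
          set P := L*(5*L-1) with hP
          omega
        rw [zero_zpow _ he, mul_zero]
    have hN : ∑' n : ℕ, (0:ℂ)^(n^2)/qp 0 n = 1 := by
      rw [tsum_eq_single 0]
      · simp [hqp]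
      · intro n hn
        rw [zero_pow (by positivity), zero_div]
    rw [hqpinf, hL, hN]
    norm_num
  · have key := key_identity hq hq0
    have hreindex : ∑' L : ℤ, (-1 : ℂ)^L * q^((L*(5*L-1))/2) = ∑' j : ℤ, wD q j := by
      calc ∑' L : ℤ, (-1 : ℂ)^L * q^((L*(5*L-1))/2)
          = ∑' j : ℤ, (-1 : ℂ)^(Equiv.neg ℤ j) * q^(((Equiv.neg ℤ j)*(5*(Equiv.neg ℤ j)-1))/2) :=
            ((Equiv.neg ℤ).tsum_eq (fun L => (-1 : ℂ)^L * q^((L*(5*L-1))/2))).symm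
        _ = ∑' j : ℤ, wD q j := by
            apply tsum_congr
            intro j
            have hjneg : Equiv.neg ℤ j = -j := rfl
            rw [hjneg, wD]
            have h2 : (-1:ℂ)^j * (-1:ℂ)^j = 1 := by
              rw [← zpow_add₀ (by norm_num : (-1:ℂ) ≠ 0), show j + j = 2*j from by ring,
                zpow_mul]
              norm_num
            have hneg : (-1:ℂ)^(-j) = (-1:ℂ)^j := by
              rw [zpow_neg]
              exact inv_eq_of_mul_eq_one_right h2
            rw [hneg, show (-j)*(5*(-j)-1) = j*(5*j+1) from by ring]
    rw [hreindex, key]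
    rw [one_div]
    ring
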